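/- For every integer g ≥ 1, the power series Σ_{d=1}^{∞} (F_g^d / d!) · q^d has radius of convergence at least 1; i.e. for every q ∈ ℂ with |q| < 1 the series Σ_{d≥1} (q^d/d!) F_g^d converges absolutely, so F_g is an analytic function on the open unit disc. -/

import Mathlib

noncomputable section

/-- `F_g^d`: the number of tuples `(π₁, π₂, τ₁, …, τ_{2g−2})` of permutations of `{1,…,d}`
such that (1) `π₁π₂π₁⁻¹π₂⁻¹τ₁⋯τ_{2g−2}` is the identity, (2) each `τ_i` is a transposition,
(3) `π₁, π₂, τ₁, …, τ_{2g−2}` generate a subgroup acting transitively on `{1,…,d}`, and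
(4) writing `τ_i = (s_i t_i)` with `s_i < t_i` one has `t₁ ≤ … ≤ t_{2g−2}`. -/
def Fgd (g d : ℕ) : ℕ :=
  Nat.card {c : Equiv.Perm (Fin d) × Equiv.Perm (Fin d) × (Fin (2 * g - 2) → Equiv.Perm (Fin d)) //
    c.1 * c.2.1 * c.1⁻¹ * c.2.1⁻¹ * (List.ofFn c.2.2).prod = 1 ∧
    (∀ i, (c.2.2 i).IsSwap) ∧
    (∀ x y : Fin d, ∃ σ ∈ Subgroup.closure ({c.1, c.2.1} ∪ Set.range c.2.2), σ x = y) ∧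
    (∀ i j : Fin (2 * g - 2), i ≤ j → ∀ a b a' b' : Fin d, a < b → a' < b' →
      c.2.2 i = Equiv.swap a b → c.2.2 j = Equiv.swap a' b' → b ≤ b')}

/-! ### Auxiliary counting lemmas -/

/-- Zero-padded lists of positive naturals are determined by their padding. -/
lemma FgdAux.pad_inj : ∀ {b : ℕ} {l₁ l₂ : List ℕ}, l₁.length ≤ b → l₂.length ≤ b →
    (∀ x ∈ l₁, 0 < x) → (∀ x ∈ l₂, 0 < x) →
    (∀ j : Fin b, l₁.getD j 0 = l₂.getD j 0) → l₁ = l₂ := by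
  intro b
  induction b with
  | zero =>
    intro l₁ l₂ h₁ h₂ _ _ _
    rw [Nat.le_zero, List.length_eq_zero_iff] at h₁ h₂
    rw [h₁, h₂]
  | succ b ih =>
    intro l₁ l₂ h₁ h₂ p₁ p₂ h
    match l₁, l₂ with
    | [], [] => rfl
    | [], x :: l₂ =>
      have := h ⟨0, Nat.succ_pos b⟩
      simp at this
      exact absurd this.symm (Nat.pos_iff_ne_zero.mp (p₂ x (by simp)))
    | x :: l₁, [] =>
      have := h ⟨0, Nat.succ_pos b⟩
      simp at this
      exact absurd this (Nat.pos_iff_ne_zero.mp (p₁ x (by simp)))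
    | x :: l₁, y :: l₂ =>
      have h0 := h ⟨0, Nat.succ_pos b⟩
      simp at h0
      have htail : l₁ = l₂ := by
        apply ih (Nat.le_of_succ_le_succ h₁) (Nat.le_of_succ_le_succ h₂)
          (fun z hz => p₁ z (by simp [hz])) (fun z hz => p₂ z (by simp [hz]))
        intro j
        have := h j.succ
        simpa using this
      rw [h0, htail]

/-- A subexponential bound on the number of partitions of `n`. -/
lemma FgdAux.card_partition_le (n : ℕ) :
    Fintype.card (Nat.Partition n) ≤ (n + 1) ^ (2 * Nat.sqrt n + 1) := by
  classical
  set s : ℕ := Nat.sqrt n + 1 with hs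
  have hmem_le : ∀ (P : n.Partition) (x : ℕ), x ∈ P.parts → x ≤ n := by
    intro P x hx
    calc x ≤ P.parts.sum := Multiset.single_le_sum (fun y _ => Nat.zero_le y) x hx
    _ = n := P.parts_sum
  have hcount : ∀ (P : n.Partition) (a : ℕ), P.parts.count a ≤ n := by
    intro P a
    calc P.parts.count a ≤ P.parts.card := Multiset.count_le_card _ _
    _ = P.parts.card • 1 := by simp
    _ ≤ P.parts.sum := Multiset.card_nsmul_le_sum (fun x hx => P.parts_pos hx)
    _ = n := P.parts_sum
  have hgetD_le : ∀ (l : List ℕ), (∀ x ∈ l, x ≤ n) → ∀ j : ℕ, l.getD j 0 ≤ n := by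
    intro l hl j
    rcases Nat.lt_or_ge j l.length with hj | hj
    · rw [List.getD_eq_getElem l 0 hj]; exact hl _ (List.getElem_mem hj)
    · rw [List.getD_eq_default l 0 hj]; exact Nat.zero_le n
  set big : n.Partition → Multiset ℕ := fun P => P.parts.filter (fun x => s < x) with hbig
  have hbiglen : ∀ P : n.Partition, (big P).card ≤ Nat.sqrt n := by
    intro P
    have h1 : (big P).card • (s + 1) ≤ (big P).sum :=
      Multiset.card_nsmul_le_sum (fun x hx => (Multiset.mem_filter.mp hx).2)
    have h2 : (big P).sum ≤ n := by
      conv_rhs => rw [← P.parts_sum]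
      conv_rhs => rw [← Multiset.filter_add_not (fun x => s < x) P.parts]
      rw [Multiset.sum_add]
      exact Nat.le_add_right _ _
    have h3 : n ≤ Nat.sqrt n * (s + 1) := by
      have := Nat.lt_succ_sqrt n
      nlinarith [Nat.sqrt n]
    have h4 : (big P).card * (s + 1) ≤ Nat.sqrt n * (s + 1) := by
      calc (big P).card * (s + 1) = (big P).card • (s + 1) := by rw [smul_eq_mul]
      _ ≤ (big P).sum := h1
      _ ≤ n := h2
      _ ≤ _ := h3
    exact Nat.le_of_mul_le_mul_right h4 (Nat.succ_pos s)
  set enc : n.Partition → (Fin s → Fin (n + 1)) × (Fin (Nat.sqrt n) → Fin (n + 1)) :=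
    fun P => (fun i => ⟨P.parts.count ((i : ℕ) + 1), Nat.lt_succ_of_le (hcount P _)⟩,
      fun j => ⟨((big P).sort (· ≤ ·)).getD j 0, Nat.lt_succ_of_le (hgetD_le _
        (fun x hx => hmem_le P x (Multiset.mem_of_le (Multiset.filter_le _ _)
          ((Multiset.mem_sort _).mp hx))) j)⟩) with henc
  have hinj : Function.Injective enc := by
    intro P Q hPQ
    have h1 := congrArg Prod.fst hPQ
    have h2 := congrArg Prod.snd hPQ
    simp only [henc] at h1 h2
    have hbigeq : big P = big Q := by
      have hl : ((big P).sort (· ≤ ·)) = ((big Q).sort (· ≤ ·)) := by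
        apply FgdAux.pad_inj (b := Nat.sqrt n)
        · rw [Multiset.length_sort]; exact hbiglen P
        · rw [Multiset.length_sort]; exact hbiglen Q
        · intro x hx
          have : s < x := (Multiset.mem_filter.mp ((Multiset.mem_sort _).mp hx)).2
          omega
        · intro x hx
          have : s < x := (Multiset.mem_filter.mp ((Multiset.mem_sort _).mp hx)).2
          omega
        · intro j
          have := congrFun h2 j
          exact congrArg Fin.val this
      calc big P = ((big P).sort (· ≤ ·) : Multiset ℕ) := (Multiset.sort_eq _ _).symm
      _ = ((big Q).sort (· ≤ ·) : Multiset ℕ) := by rw [hl]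
      _ = big Q := Multiset.sort_eq _ _
    have hsmalleq : P.parts.filter (fun x => ¬ s < x) = Q.parts.filter (fun x => ¬ s < x) := by
      ext a
      rw [Multiset.count_filter, Multiset.count_filter]
      by_cases ha : ¬ s < a
      · simp only [ha, if_true]
        rcases Nat.eq_zero_or_pos a with rfl | hapos
        · rw [Multiset.count_eq_zero_of_notMem, Multiset.count_eq_zero_of_notMem]
          · exact fun h => lt_irrefl 0 (Q.parts_pos h)
          · exact fun h => lt_irrefl 0 (P.parts_pos h)
        · have hlt : a - 1 < s := by omega
          have h1' := congrFun h1 ⟨a - 1, hlt⟩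
          have := congrArg Fin.val h1'
          simp only at this
          have ha1 : a - 1 + 1 = a := by omega
          rwa [ha1] at this
      · simp [ha]
    apply Nat.Partition.ext
    calc P.parts = big P + P.parts.filter (fun x => ¬ s < x) := by
          simp only [hbig]; exact (Multiset.filter_add_not _ _).symm
    _ = big Q + Q.parts.filter (fun x => ¬ s < x) := by rw [hbigeq, hsmalleq]
    _ = Q.parts := by simp only [hbig]; exact Multiset.filter_add_not _ _
  calc Fintype.card (Nat.Partition n)
      ≤ Fintype.card ((Fin s → Fin (n + 1)) × (Fin (Nat.sqrt n) → Fin (n + 1))) :=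
        Fintype.card_le_of_injective enc hinj
  _ = (n + 1) ^ s * (n + 1) ^ Nat.sqrt n := by simp
  _ = (n + 1) ^ (2 * Nat.sqrt n + 1) := by rw [hs, ← pow_add]; ring_nf

/-- Conjugacy classes of `Perm (Fin d)` are counted by partitions of `d`. -/
lemma FgdAux.card_conjClasses_perm_le (d : ℕ) :
    Nat.card (ConjClasses (Equiv.Perm (Fin d))) ≤ (d + 1) ^ (2 * Nat.sqrt d + 1) := by
  classical
  let f : ConjClasses (Equiv.Perm (Fin d)) → Nat.Partition (Fintype.card (Fin d)) :=
    Quotient.lift (fun σ => σ.partition) (fun a b hab =>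
      (Equiv.Perm.partition_eq_of_isConj.mp hab))
  have hf : Function.Injective f := by
    intro x y
    induction x using Quotient.inductionOn with | h a =>
    induction y using Quotient.inductionOn with | h b =>
    intro hab
    exact Quotient.sound (Equiv.Perm.partition_eq_of_isConj.mpr hab)
  calc Nat.card (ConjClasses (Equiv.Perm (Fin d)))
      ≤ Nat.card (Nat.Partition (Fintype.card (Fin d))) := Nat.card_le_card_of_injective f hf
  _ = Fintype.card (Nat.Partition (Fintype.card (Fin d))) := Nat.card_eq_fintype_card
  _ ≤ (d + 1) ^ (2 * Nat.sqrt d + 1) := by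
      have := FgdAux.card_partition_le (Fintype.card (Fin d))
      simpa using this

/-- There are at most `d * d` transpositions in `Perm (Fin d)`. -/
lemma FgdAux.card_swaps_le (d : ℕ) :
    Nat.card {σ : Equiv.Perm (Fin d) // σ.IsSwap} ≤ d * d := by
  classical
  let f : {σ : Equiv.Perm (Fin d) // σ.IsSwap} → Fin d × Fin d :=
    fun x => (x.2.choose, x.2.choose_spec.choose)
  have hgf : ∀ x : {σ : Equiv.Perm (Fin d) // σ.IsSwap},
      (x : Equiv.Perm (Fin d)) = Equiv.swap (f x).1 (f x).2 := by
    rintro ⟨σ, hσ⟩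
    exact hσ.choose_spec.choose_spec.2
  have hf : Function.Injective f := by
    intro x y h
    apply Subtype.ext
    rw [hgf x, hgf y, h]
  calc Nat.card {σ : Equiv.Perm (Fin d) // σ.IsSwap} ≤ Nat.card (Fin d × Fin d) :=
    Nat.card_le_card_of_injective f hf
  _ = d * d := by simp

/-- canonical solution of the commutator equation, if any -/
def FgdAux.rep {d m : ℕ} (a : Equiv.Perm (Fin d)) (τ : Fin m → Equiv.Perm (Fin d)) :
    Equiv.Perm (Fin d) :=
  if h : ∃ x : Equiv.Perm (Fin d), a * x * a⁻¹ * x⁻¹ * (List.ofFn τ).prod = 1 then h.choose else 1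

/-- Tuples satisfying the commutator-transposition equation are counted by commuting pairs
times sequences of transpositions. -/
lemma FgdAux.card_tuples_le (d m : ℕ) :
    Nat.card {c : Equiv.Perm (Fin d) × Equiv.Perm (Fin d) × (Fin m → Equiv.Perm (Fin d)) //
      c.1 * c.2.1 * c.1⁻¹ * c.2.1⁻¹ * (List.ofFn c.2.2).prod = 1 ∧
      (∀ i, (c.2.2 i).IsSwap)} ≤
    Nat.card (ConjClasses (Equiv.Perm (Fin d))) * Nat.card (Equiv.Perm (Fin d)) *
      (Nat.card {σ : Equiv.Perm (Fin d) // σ.IsSwap}) ^ m := by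
  classical
  set T := {c : Equiv.Perm (Fin d) × Equiv.Perm (Fin d) × (Fin m → Equiv.Perm (Fin d)) //
      c.1 * c.2.1 * c.1⁻¹ * c.2.1⁻¹ * (List.ofFn c.2.2).prod = 1 ∧
      (∀ i, (c.2.2 i).IsSwap)} with hT
  let Φ : T → {p : Equiv.Perm (Fin d) × Equiv.Perm (Fin d) // Commute p.1 p.2} ×
      (Fin m → {σ : Equiv.Perm (Fin d) // σ.IsSwap}) := by
    rintro ⟨⟨a, x, τ⟩, h1, h2⟩
    refine ⟨⟨(a, (FgdAux.rep a τ)⁻¹ * x), ?_⟩, fun i => ⟨τ i, h2 i⟩⟩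
    have hex : ∃ y : Equiv.Perm (Fin d), a * y * a⁻¹ * y⁻¹ * (List.ofFn τ).prod = 1 := ⟨x, h1⟩
    have hrep : FgdAux.rep a τ = hex.choose := by rw [FgdAux.rep, dif_pos hex]
    have h0 : a * hex.choose * a⁻¹ * hex.choose⁻¹ * (List.ofFn τ).prod = 1 := hex.choose_spec
    set x₀ := hex.choose
    have e1 : a * x * a⁻¹ * x⁻¹ = ((List.ofFn τ).prod)⁻¹ := eq_inv_of_mul_eq_one_left h1
    have e0 : a * x₀ * a⁻¹ * x₀⁻¹ = ((List.ofFn τ).prod)⁻¹ := eq_inv_of_mul_eq_one_left h0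
    have E : a * x * a⁻¹ * x⁻¹ = a * x₀ * a⁻¹ * x₀⁻¹ := by rw [e1, e0]
    have key : a * (x₀⁻¹ * x) * a⁻¹ = x₀⁻¹ * x := by
      have := congrArg (fun y => a * x₀⁻¹ * a⁻¹ * y * x) E
      simpa [mul_assoc] using this
    rw [hrep]
    show a * (x₀⁻¹ * x) = (x₀⁻¹ * x) * a
    calc a * (x₀⁻¹ * x) = a * (x₀⁻¹ * x) * a⁻¹ * a := by group
    _ = (x₀⁻¹ * x) * a := by rw [key]
  have hΦ : Function.Injective Φ := by
    rintro ⟨⟨a, x, τ⟩, h1, h2⟩ ⟨⟨a', x', τ'⟩, h1', h2'⟩ h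
    have ha : a = a' := congrArg (fun z => z.1.1.1) h
    have hτ : τ = τ' := by
      funext i
      have := congrArg (fun z => (z.2 i).1) h
      exact this
    have hx2 : (FgdAux.rep a τ)⁻¹ * x = (FgdAux.rep a' τ')⁻¹ * x' :=
      congrArg (fun z => z.1.1.2) h
    rw [ha, hτ] at hx2
    have hx : x = x' := by
      have := congrArg (fun z => FgdAux.rep a' τ' * z) hx2
      simpa [mul_assoc] using this
    apply Subtype.ext
    show (a, x, τ) = (a', x', τ')
    rw [ha, hx, hτ]
  calc Nat.card T
      ≤ Nat.card ({p : Equiv.Perm (Fin d) × Equiv.Perm (Fin d) // Commute p.1 p.2} ×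
          (Fin m → {σ : Equiv.Perm (Fin d) // σ.IsSwap})) :=
        Nat.card_le_card_of_injective Φ hΦ
  _ = Nat.card {p : Equiv.Perm (Fin d) × Equiv.Perm (Fin d) // Commute p.1 p.2} *
        Nat.card (Fin m → {σ : Equiv.Perm (Fin d) // σ.IsSwap}) := Nat.card_prod _ _
  _ = Nat.card (ConjClasses (Equiv.Perm (Fin d))) * Nat.card (Equiv.Perm (Fin d)) *
        (Nat.card {σ : Equiv.Perm (Fin d) // σ.IsSwap}) ^ m := by
      rw [card_comm_eq_card_conjClasses_mul_card, Nat.card_fun]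
      simp

/-- The key counting bound for `Fgd`. -/
lemma FgdAux.Fgd_le (g d : ℕ) :
    Fgd g d ≤ (d + 1) ^ (2 * Nat.sqrt d + 1) * d.factorial * (d * d) ^ (2 * g - 2) := by
  classical
  set m := 2 * g - 2 with hm
  have step1 : Fgd g d ≤
      Nat.card {c : Equiv.Perm (Fin d) × Equiv.Perm (Fin d) × (Fin m → Equiv.Perm (Fin d)) //
        c.1 * c.2.1 * c.1⁻¹ * c.2.1⁻¹ * (List.ofFn c.2.2).prod = 1 ∧
        (∀ i, (c.2.2 i).IsSwap)} := by
    rw [Fgd]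
    apply Nat.card_le_card_of_injective
      (fun x => (⟨x.1, x.2.1, x.2.2.1⟩ : {c : Equiv.Perm (Fin d) × Equiv.Perm (Fin d) ×
        (Fin m → Equiv.Perm (Fin d)) //
        c.1 * c.2.1 * c.1⁻¹ * c.2.1⁻¹ * (List.ofFn c.2.2).prod = 1 ∧
        (∀ i, (c.2.2 i).IsSwap)}))
    intro x y h
    have h' := congrArg Subtype.val h
    exact Subtype.ext h'
  have hcardG : Nat.card (Equiv.Perm (Fin d)) = d.factorial := by
    rw [Nat.card_eq_fintype_card]
    simp [Fintype.card_perm]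
  calc Fgd g d
      ≤ Nat.card {c : Equiv.Perm (Fin d) × Equiv.Perm (Fin d) × (Fin m → Equiv.Perm (Fin d)) //
        c.1 * c.2.1 * c.1⁻¹ * c.2.1⁻¹ * (List.ofFn c.2.2).prod = 1 ∧
        (∀ i, (c.2.2 i).IsSwap)} := step1
  _ ≤ Nat.card (ConjClasses (Equiv.Perm (Fin d))) * Nat.card (Equiv.Perm (Fin d)) *
        (Nat.card {σ : Equiv.Perm (Fin d) // σ.IsSwap}) ^ m := FgdAux.card_tuples_le d m
  _ ≤ (d + 1) ^ (2 * Nat.sqrt d + 1) * d.factorial * (d * d) ^ m := by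
      apply Nat.mul_le_mul
      · rw [hcardG]
        exact Nat.mul_le_mul_right _ (FgdAux.card_conjClasses_perm_le d)
      · exact Nat.pow_le_pow_left (FgdAux.card_swaps_le d) m

open Filter Real in
/-- Summability of the majorant series. -/
lemma FgdAux.summable_aux {r : ℝ} (hr0 : 0 < r) (hr1 : r < 1) (K : ℕ) :
    Summable (fun d : ℕ => r ^ d * ((d : ℝ) + 1) ^ (K * (Nat.sqrt d + 1))) := by
  have hs0 : 0 < Real.sqrt r := Real.sqrt_pos.mpr hr0
  have hs1 : Real.sqrt r < 1 := by
    nlinarith [Real.sq_sqrt hr0.le, Real.sqrt_nonneg r]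
  set c : ℝ := Real.log (Real.sqrt r)⁻¹ with hc
  have hcpos : 0 < c := Real.log_pos (one_lt_inv_iff₀.mpr ⟨hs0, hs1⟩)
  set ε : ℝ := c / (4 * (K + 1)) with hε
  have hεpos : 0 < ε := by positivity
  have hlog := (isLittleO_log_rpow_atTop (by norm_num : (0:ℝ) < 1/2)).def hεpos
  have htend : Filter.Tendsto (fun d : ℕ => ((d : ℝ) + 1)) Filter.atTop Filter.atTop :=
    Filter.tendsto_atTop_add_const_right _ 1 tendsto_natCast_atTop_atTop
  have hev1 : ∀ᶠ d : ℕ in Filter.atTop,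
      Real.log ((d : ℝ) + 1) ≤ ε * ((d : ℝ) + 1) ^ ((1 : ℝ)/2) := by
    filter_upwards [htend.eventually hlog] with d hd
    have h1 : (0:ℝ) ≤ ((d : ℝ) + 1) ^ ((1:ℝ)/2) := Real.rpow_nonneg (by positivity) _
    calc Real.log ((d : ℝ) + 1) ≤ ‖Real.log ((d : ℝ) + 1)‖ := le_abs_self _
    _ ≤ ε * ‖((d : ℝ) + 1) ^ ((1:ℝ)/2)‖ := hd
    _ = ε * ((d : ℝ) + 1) ^ ((1:ℝ)/2) := by rw [Real.norm_eq_abs, abs_of_nonneg h1]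
  have hev : ∀ᶠ d : ℕ in Filter.atTop,
      ((d : ℝ) + 1) ^ (K * (Nat.sqrt d + 1)) ≤ ((Real.sqrt r)⁻¹) ^ d := by
    filter_upwards [hev1, Filter.eventually_ge_atTop 1] with d hd hd1
    have hd1' : (1 : ℝ) ≤ (d : ℝ) := by exact_mod_cast hd1
    have hx1 : (1 : ℝ) ≤ (d : ℝ) + 1 := by linarith
    have hlogpos : 0 ≤ Real.log ((d : ℝ) + 1) := Real.log_nonneg hx1
    have hns : (Nat.sqrt d : ℝ) ≤ Real.sqrt d := by
      rw [show ((Nat.sqrt d : ℝ)) = Real.sqrt ((Nat.sqrt d : ℝ)^2) by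
        rw [Real.sqrt_sq (by positivity)]]
      apply Real.sqrt_le_sqrt
      have := Nat.sqrt_le' d
      exact_mod_cast this
    have hsd : Real.sqrt d ≤ Real.sqrt ((d : ℝ) + 1) := Real.sqrt_le_sqrt (by linarith)
    have h1s : (1 : ℝ) ≤ Real.sqrt ((d : ℝ) + 1) := by
      nlinarith [Real.sqrt_nonneg ((d:ℝ)+1),
        Real.mul_self_sqrt (show (0:ℝ) ≤ (d:ℝ)+1 by positivity)]
    have hrp : ((d : ℝ) + 1) ^ ((1:ℝ)/2) = Real.sqrt ((d : ℝ) + 1) := by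
      rw [Real.sqrt_eq_rpow]
    have hsq2 : Real.sqrt ((d:ℝ)+1) * Real.sqrt ((d:ℝ)+1) = (d:ℝ)+1 :=
      Real.mul_self_sqrt (by positivity)
    have hmain : (K * (Nat.sqrt d + 1) : ℝ) * Real.log ((d : ℝ) + 1) ≤ c * d := by
      have hb : (K * (Nat.sqrt d + 1) : ℝ) ≤ (K + 1) * (2 * Real.sqrt ((d:ℝ)+1)) := by
        have : ((Nat.sqrt d : ℝ) + 1) ≤ 2 * Real.sqrt ((d:ℝ)+1) := by nlinarith
        have hK : (0:ℝ) ≤ K := by positivity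
        push_cast
        nlinarith
      calc (K * (Nat.sqrt d + 1) : ℝ) * Real.log ((d : ℝ) + 1)
          ≤ ((K + 1) * (2 * Real.sqrt ((d:ℝ)+1))) * (ε * Real.sqrt ((d:ℝ)+1)) := by
            apply mul_le_mul hb ?_ hlogpos (by positivity)
            rw [← hrp]; exact hd
      _ = 2 * ((K:ℝ)+1) * ε * (Real.sqrt ((d:ℝ)+1) * Real.sqrt ((d:ℝ)+1)) := by ring
      _ = 2 * ((K:ℝ)+1) * ε * ((d:ℝ)+1) := by rw [hsq2]
      _ ≤ 2 * ((K:ℝ)+1) * ε * (2 * d) := by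
            apply mul_le_mul_of_nonneg_left (by linarith) (by positivity)
      _ = (4 * ((K:ℝ)+1) * ε) * d := by ring
      _ = c * d := by rw [hε]; field_simp
    have hL : (0:ℝ) < ((d : ℝ) + 1) ^ (K * (Nat.sqrt d + 1)) := by positivity
    have hR : (0:ℝ) < ((Real.sqrt r)⁻¹) ^ d := by positivity
    rw [← Real.log_le_log_iff hL hR]
    rw [Real.log_pow, Real.log_pow]
    calc (↑(K * (Nat.sqrt d + 1))) * Real.log ((d:ℝ)+1)
        = (K * (Nat.sqrt d + 1) : ℝ) * Real.log ((d : ℝ) + 1) := by push_cast; ring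
    _ ≤ c * d := hmain
    _ = (d : ℝ) * Real.log (Real.sqrt r)⁻¹ := by rw [hc]; ring
  apply summable_of_isBigO_nat (summable_geometric_of_lt_one hs0.le hs1)
  apply Asymptotics.IsBigO.of_bound 1
  filter_upwards [hev] with d hd
  have h0 : (0:ℝ) ≤ r ^ d * ((d : ℝ) + 1) ^ (K * (Nat.sqrt d + 1)) := by positivity
  rw [Real.norm_eq_abs, Real.norm_eq_abs, abs_of_nonneg h0,
    abs_of_nonneg (by positivity : (0:ℝ) ≤ Real.sqrt r ^ d), one_mul]
  calc r ^ d * ((d : ℝ) + 1) ^ (K * (Nat.sqrt d + 1))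
      ≤ r ^ d * ((Real.sqrt r)⁻¹) ^ d := by
        apply mul_le_mul_of_nonneg_left hd (by positivity)
  _ = Real.sqrt r ^ d := by
      rw [← mul_pow]
      congr 1
      rw [show r = Real.sqrt r * Real.sqrt r from (Real.mul_self_sqrt hr0.le).symm]
      field_simp
      rw [Real.sqrt_sq hs0.le]

/-- For every `g ≥ 1`, the power series `Σ_{d≥1} (q^d/d!) F_g^d` converges absolutely for
every `|q| < 1`; so its radius of convergence is at least `1` and it defines an analytic
function on the open unit disc. -/
theorem Fg_series_abs_convergent (g : ℕ) (hg : 1 ≤ g) (q : ℂ) (hq : ‖q‖ < 1) :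
    Summable (fun d : ℕ =>
      ‖q ^ (d + 1) / (Nat.factorial (d + 1)) * (Fgd g (d + 1))‖) := by
  classical
  set r : ℝ := max (‖q‖) (1/2) with hr
  have hr0 : 0 < r := lt_max_of_lt_right (by norm_num)
  have hr1 : r < 1 := max_lt hq (by norm_num)
  have hqr : ‖q‖ ≤ r := le_max_left _ _
  set m : ℕ := 2 * g - 2 with hm
  set K : ℕ := 2 * m + 3 with hK
  -- nat bound : Fgd g e ≤ e! * (e+1)^(K*(√e+1))
  have hnat : ∀ e : ℕ, Fgd g e ≤ e.factorial * (e + 1) ^ (K * (Nat.sqrt e + 1)) := by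
    intro e
    calc Fgd g e ≤ (e + 1) ^ (2 * Nat.sqrt e + 1) * e.factorial * (e * e) ^ m :=
      FgdAux.Fgd_le g e
    _ ≤ (e + 1) ^ (2 * Nat.sqrt e + 1) * e.factorial * ((e + 1) * (e + 1)) ^ m := by
        apply Nat.mul_le_mul_left
        exact Nat.pow_le_pow_left (Nat.mul_le_mul (Nat.le_succ e) (Nat.le_succ e)) m
    _ = e.factorial * (e + 1) ^ (2 * Nat.sqrt e + 1 + 2 * m) := by
        rw [show (e + 1) * (e + 1) = (e + 1) ^ 2 by ring, ← pow_mul, pow_add]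
        ring
    _ ≤ e.factorial * (e + 1) ^ (K * (Nat.sqrt e + 1)) := by
        apply Nat.mul_le_mul_left
        apply Nat.pow_le_pow_right (Nat.succ_le_succ (Nat.zero_le e))
        rw [hK]
        nlinarith [Nat.sqrt e, Nat.zero_le (m * Nat.sqrt e)]
  -- real bound on the terms
  have hterm : ∀ d : ℕ,
      ‖q ^ (d + 1) / (Nat.factorial (d + 1)) * (Fgd g (d + 1))‖ ≤
      r ^ (d + 1) * (((d + 1 : ℕ) : ℝ) + 1) ^ (K * (Nat.sqrt (d + 1) + 1)) := by
    intro d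
    set e : ℕ := d + 1 with he
    have hfac : (0 : ℝ) < (e.factorial : ℝ) := by exact_mod_cast e.factorial_pos
    have habs : ‖q ^ e / (Nat.factorial e) * (Fgd g e)‖ =
        ‖q‖ ^ e / (e.factorial : ℝ) * (Fgd g e : ℝ) := by
      rw [norm_mul, norm_div, norm_pow]
      congr 2
      · exact Complex.norm_natCast _
      · exact Complex.norm_natCast _
    rw [habs]
    have h1 : (Fgd g e : ℝ) ≤ (e.factorial : ℝ) * ((e : ℝ) + 1) ^ (K * (Nat.sqrt e + 1)) := by
      exact_mod_cast hnat e
    calc ‖q‖ ^ e / (e.factorial : ℝ) * (Fgd g e : ℝ)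
        ≤ ‖q‖ ^ e / (e.factorial : ℝ) *
          ((e.factorial : ℝ) * ((e : ℝ) + 1) ^ (K * (Nat.sqrt e + 1))) := by
          apply mul_le_mul_of_nonneg_left h1
          positivity
    _ = ‖q‖ ^ e * ((e : ℝ) + 1) ^ (K * (Nat.sqrt e + 1)) := by
          field_simp
    _ ≤ r ^ e * ((e : ℝ) + 1) ^ (K * (Nat.sqrt e + 1)) := by
          apply mul_le_mul_of_nonneg_right _ (by positivity)
          exact pow_le_pow_left₀ (norm_nonneg q) hqr e
  have hsum : Summable (fun d : ℕ =>
      r ^ (d + 1) * (((d + 1 : ℕ) : ℝ) + 1) ^ (K * (Nat.sqrt (d + 1) + 1))) := by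
    have := FgdAux.summable_aux hr0 hr1 K
    exact (summable_nat_add_iff
      (f := fun d : ℕ => r ^ d * ((d : ℝ) + 1) ^ (K * (Nat.sqrt d + 1))) 1).mpr this
  apply Summable.of_nonneg_of_le (fun d => norm_nonneg _) hterm hsum
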